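/- Let R be an atomic integral domain satisfying the PC condition. Then R is a principal ideal domain. -/

import Mathlib

/-- Let `R` be an atomic integral domain satisfying the PC condition
(every proper two-generated ideal is contained in a proper principal ideal).
Then `R` is a principal ideal domain. -/
theorem atomic_PC_isPrincipalIdealRing (R : Type*) [CommRing R] [IsDomain R]
    (hatomic : ∀ a : R, a ≠ 0 → ¬IsUnit a →
      ∃ s : Multiset R, (∀ x ∈ s, Irreducible x) ∧ s.prod = a)
    (hPC : ∀ a b : R, Ideal.span {a, b} ≠ (⊤ : Ideal R) →
      ∃ c : R, Ideal.span {a, b} ≤ Ideal.span {c} ∧ Ideal.span ({c} : Set R) ≠ ⊤) :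
    IsPrincipalIdealRing R := by
  classical
  -- Step 1: every irreducible element is prime.
  have hprime : ∀ p : R, Irreducible p → Prime p := by
    intro p hp
    refine ⟨hp.ne_zero, hp.not_isUnit, ?_⟩
    intro a b hab
    by_cases ha : p ∣ a
    · exact Or.inl ha
    · right
      have htop : Ideal.span ({p, a} : Set R) = ⊤ := by
        by_contra hne
        obtain ⟨c, hle, hcne⟩ := hPC p a hne
        have hcp : c ∣ p := by
          rw [← Ideal.span_singleton_le_span_singleton]
          exact le_trans (Ideal.span_mono (by simp)) hle
        have hca : c ∣ a := by
          rw [← Ideal.span_singleton_le_span_singleton]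
          exact le_trans (Ideal.span_mono (by simp)) hle
        have hcu : ¬IsUnit c := fun h => hcne (Ideal.span_singleton_eq_top.mpr h)
        obtain ⟨v, hv⟩ := hcp
        rcases hp.isUnit_or_isUnit hv with h | h
        · exact hcu h
        · obtain ⟨w, hw⟩ := h.exists_right_inv
          have hpc : p ∣ c := ⟨w, by rw [hv, mul_assoc, hw, mul_one]⟩
          exact ha (hpc.trans hca)
      have h1 : (1 : R) ∈ Ideal.span ({p, a} : Set R) := htop ▸ Submodule.mem_top
      obtain ⟨u, v, huv⟩ := Ideal.mem_span_pair.mp h1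
      have hb : b = u * p * b + v * (a * b) := by
        calc b = (u * p + v * a) * b := by rw [huv, one_mul]
        _ = u * p * b + v * (a * b) := by ring
      rw [hb]
      exact dvd_add ⟨u * b, by ring⟩ (hab.mul_left v)
  -- Step 2: R is a unique factorization monoid.
  haveI hufm : UniqueFactorizationMonoid R := by
    apply UniqueFactorizationMonoid.of_exists_prime_factors
    intro a ha
    by_cases hu : IsUnit a
    · exact ⟨0, by simp, by simpa using (associated_one_iff_isUnit.mpr hu).symm⟩
    · obtain ⟨s, hs, hprod⟩ := hatomic a ha hu
      exact ⟨s, fun x hx => hprime x (hs x hx), by rw [hprod]; exact Associated.refl a⟩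
  haveI hwf : WfDvdMonoid R := inferInstance
  -- Step 3: R is a Bezout domain.
  haveI hbez : IsBezout R := by
    rw [IsBezout.iff_span_pair_isPrincipal]
    intro x y
    induction x using WellFounded.induction (wellFounded_dvdNotUnit (α := R)) generalizing y with
    | _ a IH =>
      by_cases ha : a = 0
      · subst ha
        refine ⟨y, ?_⟩
        show Ideal.span {0, y} = Ideal.span {y}
        rw [Ideal.span_insert, Ideal.span_singleton_eq_bot.mpr rfl, bot_sup_eq]
      by_cases htop : Ideal.span ({a, y} : Set R) = ⊤
      · exact ⟨1, show Ideal.span {a, y} = Ideal.span {1} by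
          rw [htop, Ideal.span_singleton_one]⟩
      obtain ⟨c, hle, hcne⟩ := hPC a y htop
      have hcu : ¬IsUnit c := fun h => hcne (Ideal.span_singleton_eq_top.mpr h)
      have hca : c ∣ a := by
        rw [← Ideal.span_singleton_le_span_singleton]
        exact le_trans (Ideal.span_mono (by simp)) hle
      have hcy : c ∣ y := by
        rw [← Ideal.span_singleton_le_span_singleton]
        exact le_trans (Ideal.span_mono (by simp)) hle
      obtain ⟨a', ha'⟩ := hca
      obtain ⟨y', hy'⟩ := hcy
      have ha'0 : a' ≠ 0 := by rintro rfl; simp at ha'; exact ha ha'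
      have hdnu : DvdNotUnit a' a := ⟨ha'0, c, hcu, by rw [ha', mul_comm]⟩
      obtain ⟨d, hd'⟩ := IH a' hdnu y'
      have hd : Ideal.span ({a', y'} : Set R) = Ideal.span {d} := hd'
      -- claim: span {a, y} = span {c * d}
      refine ⟨c * d, ?_⟩
      show Ideal.span ({a, y} : Set R) = Ideal.span {c * d}
      refine le_antisymm ?_ ?_
      · rw [Ideal.span_le]
        rintro z hz
        rcases hz with rfl | hz
        · have : d ∣ a' := Ideal.span_singleton_le_span_singleton.mp
            (by rw [← hd]; exact Ideal.span_mono (by simp))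
          rw [SetLike.mem_coe, Ideal.mem_span_singleton, ha']
          exact mul_dvd_mul_left c this
        · rcases hz with rfl
          have : d ∣ y' := Ideal.span_singleton_le_span_singleton.mp
            (by rw [← hd]; exact Ideal.span_mono (by simp))
          rw [SetLike.mem_coe, Ideal.mem_span_singleton, hy']
          exact mul_dvd_mul_left c this
      · rw [Ideal.span_singleton_le_iff_mem]
        have hdmem : d ∈ Ideal.span ({a', y'} : Set R) := by
          rw [hd]; exact Ideal.subset_span (by simp)
        obtain ⟨u, v, huv⟩ := Ideal.mem_span_pair.mp hdmem
        rw [Ideal.mem_span_pair]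
        exact ⟨u, v, by rw [ha', hy']; ring_nf; rw [← huv]; ring⟩
  -- Step 4: Bezout + UFD implies PID.
  exact (IsBezout.TFAE (R := R)).out 2 1 |>.mp hufm
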